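/- Fix a step size η ∈ (0, 0.3] and an initialization with w1^(0) ∈ (2.7, 3), w2^(0) ∈ (−0.5, 0), and b1^(0) = b2^(0) = 0. Define the gradient descent iterates θ^(t+1) = θ^(t) − η*∇L(θ^(t)) (L is differentiable at every iterate), and let x*(t) = (b2^(t) − b1^(t))/(w1^(t) − w2^(t)). Then for all t ≥ 7/η: x*(t) ≥ 1/(25 + 5*ln(1 + 4*η*t)). -/

import Mathlib

/-- The two-neuron ReLU network: `θ = (w1, b1, w2, b2)`. -/
noncomputable def Phi (θ : EuclideanSpace ℝ (Fin 4)) (x : ℝ) : ℝ :=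
  max 0 (θ 0 * x + θ 1) - max 0 (θ 2 * x + θ 3)

/-- The training loss on `(x1,y1) = (-1,-1)`, `(x2,y2) = (1,1)` under the
exponential loss. -/
noncomputable def Loss (θ : EuclideanSpace ℝ (Fin 4)) : ℝ :=
  (1/2) * Real.exp (Phi θ (-1)) + (1/2) * Real.exp (-(Phi θ 1))

/- Auxiliary: the smooth local model for `Loss` and its gradient. -/

noncomputable def gmod (θ : EuclideanSpace ℝ (Fin 4)) : ℝ :=
  (1/2) * Real.exp (θ 2 - θ 3) + (1/2) * Real.exp (-(θ 0 + θ 1))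

noncomputable def vgrad (θ : EuclideanSpace ℝ (Fin 4)) : EuclideanSpace ℝ (Fin 4) :=
  (WithLp.equiv 2 (Fin 4 → ℝ)).symm
    ![-(1/2) * Real.exp (-(θ 0 + θ 1)), -(1/2) * Real.exp (-(θ 0 + θ 1)),
      (1/2) * Real.exp (θ 2 - θ 3), -(1/2) * Real.exp (θ 2 - θ 3)]

noncomputable abbrev Pj (i : Fin 4) : EuclideanSpace ℝ (Fin 4) →L[ℝ] ℝ := EuclideanSpace.proj i

lemma gmod_hasGradientAt (θ : EuclideanSpace ℝ (Fin 4)) : HasGradientAt gmod (vgrad θ) θ := by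
  rw [hasGradientAt_iff_hasFDerivAt]
  have h0 : HasFDerivAt (𝕜 := ℝ) (fun θ' : EuclideanSpace ℝ (Fin 4) => (θ' 0 : ℝ))
      (Pj 0) θ := (Pj 0).hasFDerivAt
  have h1 : HasFDerivAt (𝕜 := ℝ) (fun θ' : EuclideanSpace ℝ (Fin 4) => (θ' 1 : ℝ))
      (Pj 1) θ := (Pj 1).hasFDerivAt
  have h2 : HasFDerivAt (𝕜 := ℝ) (fun θ' : EuclideanSpace ℝ (Fin 4) => (θ' 2 : ℝ))
      (Pj 2) θ := (Pj 2).hasFDerivAt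
  have h3 : HasFDerivAt (𝕜 := ℝ) (fun θ' : EuclideanSpace ℝ (Fin 4) => (θ' 3 : ℝ))
      (Pj 3) θ := (Pj 3).hasFDerivAt
  have hA : HasFDerivAt (𝕜 := ℝ)
      (fun θ' : EuclideanSpace ℝ (Fin 4) => (1/2) * Real.exp (θ' 2 - θ' 3))
      ((1/2 * Real.exp (θ 2 - θ 3)) • (Pj 2 - Pj 3)) θ := by
    have := ((h2.sub h3).exp).const_mul (1/2)
    refine this.congr_fderiv ?_
    module
  have hB : HasFDerivAt (𝕜 := ℝ)
      (fun θ' : EuclideanSpace ℝ (Fin 4) => (1/2) * Real.exp (-(θ' 0 + θ' 1)))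
      ((-(1/2) * Real.exp (-(θ 0 + θ 1))) • (Pj 0 + Pj 1)) θ := by
    have := (((h0.add h1).neg).exp).const_mul (1/2)
    refine this.congr_fderiv ?_
    module
  have hg := hA.add hB
  refine hg.congr_fderiv ?_
  apply ContinuousLinearMap.ext
  intro u
  simp [InnerProductSpace.toDual_apply_apply, vgrad, PiLp.inner_apply, Fin.sum_univ_four]
  ring

lemma loss_hasGradientAt (θ : EuclideanSpace ℝ (Fin 4))
    (h1 : θ 0 * (-1) + θ 1 < 0) (h2 : 0 < θ 0 * 1 + θ 1)
    (h3 : 0 < θ 2 * (-1) + θ 3) (h4 : θ 2 * 1 + θ 3 < 0) :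
    HasGradientAt Loss (vgrad θ) θ := by
  have cts : ∀ (i j : Fin 4) (a : ℝ),
      Continuous (fun θ' : EuclideanSpace ℝ (Fin 4) => θ' i * a + θ' j) := fun i j a => by
    exact (((EuclideanSpace.proj i).continuous).mul continuous_const).add
      (EuclideanSpace.proj j).continuous
  have e1 : ∀ᶠ θ' in nhds θ, θ' 0 * (-1) + θ' 1 < 0 :=
    Filter.Tendsto.eventually_lt_const h1 ((cts 0 1 (-1)).continuousAt)
  have e2 : ∀ᶠ θ' in nhds θ, 0 < θ' 0 * 1 + θ' 1 :=
    Filter.Tendsto.eventually_const_lt h2 ((cts 0 1 1).continuousAt)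
  have e3 : ∀ᶠ θ' in nhds θ, 0 < θ' 2 * (-1) + θ' 3 :=
    Filter.Tendsto.eventually_const_lt h3 ((cts 2 3 (-1)).continuousAt)
  have e4 : ∀ᶠ θ' in nhds θ, θ' 2 * 1 + θ' 3 < 0 :=
    Filter.Tendsto.eventually_lt_const h4 ((cts 2 3 1).continuousAt)
  have hEq : Loss =ᶠ[nhds θ] gmod := by
    filter_upwards [e1, e2, e3, e4] with θ' k1 k2 k3 k4
    have m1 : max 0 (θ' 0 * (-1) + θ' 1) = 0 := max_eq_left k1.le
    have m2 : max 0 (θ' 2 * (-1) + θ' 3) = θ' 2 * (-1) + θ' 3 := max_eq_right k3.le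
    have m3 : max 0 (θ' 0 * 1 + θ' 1) = θ' 0 * 1 + θ' 1 := max_eq_right k2.le
    have m4 : max 0 (θ' 2 * 1 + θ' 3) = 0 := max_eq_left k4.le
    have r1 : (0:ℝ) - (θ' 2 * (-1) + θ' 3) = θ' 2 - θ' 3 := by ring
    have r2 : -((θ' 0 * 1 + θ' 1) - 0) = -(θ' 0 + θ' 1) := by ring
    simp only [Loss, Phi, gmod, m1, m2, m3, m4, r1, r2]
  have hg := gmod_hasGradientAt θ
  rw [hasGradientAt_iff_hasFDerivAt] at hg ⊢
  exact hg.congr_of_eventuallyEq hEq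

lemma expaux {x : ℝ} (h0 : 0 ≤ x) (h3 : x ≤ 0.3) : Real.exp x ≤ 1 + (10/7) * x := by
  have h1 : (-x) + 1 ≤ Real.exp (-x) := Real.add_one_le_exp (-x)
  have h2 : Real.exp x * Real.exp (-x) = 1 := by rw [← Real.exp_add]; simp
  nlinarith [Real.exp_pos x, Real.exp_pos (-x),
    mul_le_mul_of_nonneg_left h1 (Real.exp_pos x).le]

lemma step_upper {u η : ℝ} (hu : 0 ≤ u) (h0 : 0 ≤ η) (h3 : η ≤ 0.3) :
    Real.exp (u + η * Real.exp (-u)) ≤ Real.exp u + (10/7) * η := by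
  have he1 : Real.exp (-u) ≤ 1 := by
    rw [show (1:ℝ) = Real.exp 0 by simp]
    exact Real.exp_le_exp.mpr (by linarith)
  have hx0 : 0 ≤ η * Real.exp (-u) := mul_nonneg h0 (Real.exp_pos _).le
  have hx3 : η * Real.exp (-u) ≤ 0.3 := by nlinarith [Real.exp_pos (-u)]
  have h := expaux hx0 hx3
  have hinv : Real.exp u * Real.exp (-u) = 1 := by rw [← Real.exp_add]; simp
  rw [Real.exp_add]
  nlinarith [Real.exp_pos u, mul_le_mul_of_nonneg_left h (Real.exp_pos u).le]

lemma step_lower {u η : ℝ} (h0 : 0 ≤ η) :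
    Real.exp u + η ≤ Real.exp (u + η * Real.exp (-u)) := by
  have h1 : η * Real.exp (-u) + 1 ≤ Real.exp (η * Real.exp (-u)) :=
    Real.add_one_le_exp _
  have hinv : Real.exp u * Real.exp (-u) = 1 := by rw [← Real.exp_add]; simp
  rw [Real.exp_add]
  nlinarith [Real.exp_pos u, mul_le_mul_of_nonneg_left h1 (Real.exp_pos u).le]

set_option maxHeartbeats 2000000 in
/-- non-asymptotic lower bound on the decision threshold
`x*(t) = (b2 - b1)/(w1 - w2)` of gradient descent with `η ∈ (0, 0.3]`,
`w1⁰ ∈ (2.7, 3)`, `w2⁰ ∈ (-0.5, 0)` and zero biases, valid for `t ≥ 7/η`. -/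
theorem stmt_16 (η : ℝ) (hη : η ∈ Set.Ioc (0:ℝ) 0.3)
    (θ : ℕ → EuclideanSpace ℝ (Fin 4))
    (hw1 : θ 0 0 ∈ Set.Ioo (2.7:ℝ) 3) (hw2 : θ 0 2 ∈ Set.Ioo (-0.5:ℝ) 0)
    (hb1 : θ 0 1 = 0) (hb2 : θ 0 3 = 0)
    (hstep : ∀ t : ℕ, θ (t+1) = θ t - η • gradient Loss (θ t)) :
    (∀ t : ℕ, DifferentiableAt ℝ Loss (θ t)) ∧
    ∀ t : ℕ, 7 / η ≤ (t : ℝ) →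
      1 / (25 + 5 * Real.log (1 + 4 * η * t)) ≤
        (θ t 3 - θ t 1) / (θ t 0 - θ t 2) := by
  obtain ⟨hη0, hη3⟩ := hη
  obtain ⟨hw1l, hw1u⟩ := hw1
  obtain ⟨hw2l, hw2u⟩ := hw2
  -- the master induction
  have key : ∀ t : ℕ,
      θ t 1 = θ t 0 - θ 0 0 ∧ θ t 3 = θ 0 2 - θ t 2 ∧
      θ 0 0 ≤ θ t 0 ∧ θ t 2 ≤ θ 0 2 ∧
      Real.exp (θ t 0 + θ t 1) ≤ Real.exp (θ 0 0) + (10/7) * (η * t) ∧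
      Real.exp (θ t 3 - θ t 2) ≤ Real.exp (-(θ 0 2)) + (10/7) * (η * t) ∧
      Real.exp (-(θ 0 2)) + η * t ≤ Real.exp (θ t 3 - θ t 2) := by
    intro t
    induction t with
    | zero =>
      refine ⟨by simp [hb1], by simp [hb2], le_refl _, le_refl _, ?_, ?_, ?_⟩ <;>
        simp [hb1, hb2]
    | succ t ih =>
      obtain ⟨i1, i2, i3, i4, e1, e2, e3⟩ := ih
      -- region conditions
      have r1 : θ t 0 * (-1) + θ t 1 < 0 := by linarith
      have r2 : 0 < θ t 0 * 1 + θ t 1 := by linarith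
      have r3 : 0 < θ t 2 * (-1) + θ t 3 := by linarith
      have r4 : θ t 2 * 1 + θ t 3 < 0 := by linarith
      have hG := loss_hasGradientAt (θ t) r1 r2 r3 r4
      have hgrad : gradient Loss (θ t) = vgrad (θ t) := hG.gradient
      have hco : ∀ i : Fin 4, θ (t+1) i = θ t i - η * vgrad (θ t) i := by
        intro i
        rw [hstep t, hgrad]
        simp [PiLp.sub_apply, PiLp.smul_apply, smul_eq_mul]
      have g0 : vgrad (θ t) 0 = -(1/2) * Real.exp (-(θ t 0 + θ t 1)) := by
        simp [vgrad]
      have g1 : vgrad (θ t) 1 = -(1/2) * Real.exp (-(θ t 0 + θ t 1)) := by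
        simp [vgrad]
      have g2 : vgrad (θ t) 2 = (1/2) * Real.exp (θ t 2 - θ t 3) := by
        simp [vgrad]
      have g3 : vgrad (θ t) 3 = -(1/2) * Real.exp (θ t 2 - θ t 3) := by
        simp [vgrad]
      have c0 : θ (t+1) 0 = θ t 0 + η * (1/2) * Real.exp (-(θ t 0 + θ t 1)) := by
        rw [hco 0, g0]; ring
      have c1 : θ (t+1) 1 = θ t 1 + η * (1/2) * Real.exp (-(θ t 0 + θ t 1)) := by
        rw [hco 1, g1]; ring
      have c2 : θ (t+1) 2 = θ t 2 - η * (1/2) * Real.exp (θ t 2 - θ t 3) := by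
        rw [hco 2, g2]; ring
      have c3 : θ (t+1) 3 = θ t 3 + η * (1/2) * Real.exp (θ t 2 - θ t 3) := by
        rw [hco 3, g3]; ring
      have hEA : 0 < Real.exp (-(θ t 0 + θ t 1)) := Real.exp_pos _
      have hEC : 0 < Real.exp (θ t 2 - θ t 3) := Real.exp_pos _
      have hAnn : 0 ≤ θ t 0 + θ t 1 := by linarith
      have hCnn : 0 ≤ θ t 3 - θ t 2 := by linarith
      have hAup : θ (t+1) 0 + θ (t+1) 1
          = (θ t 0 + θ t 1) + η * Real.exp (-(θ t 0 + θ t 1)) := by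
        rw [c0, c1]; ring
      have hCC : Real.exp (θ t 2 - θ t 3) = Real.exp (-(θ t 3 - θ t 2)) := by
        congr 1; ring
      have hCup : θ (t+1) 3 - θ (t+1) 2
          = (θ t 3 - θ t 2) + η * Real.exp (-(θ t 3 - θ t 2)) := by
        rw [c2, c3, hCC]; ring
      have castc : ((t + 1 : ℕ) : ℝ) = (t : ℝ) + 1 := by push_cast; ring
      refine ⟨by rw [c0, c1]; linarith, by rw [c2, c3]; linarith,
        by rw [c0]; linarith [mul_nonneg (mul_nonneg hη0.le (by norm_num : (0:ℝ) ≤ 1/2)) hEA.le], by rw [c2]; linarith [mul_nonneg (mul_nonneg hη0.le (by norm_num : (0:ℝ) ≤ 1/2)) hEC.le], ?_, ?_, ?_⟩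
      · rw [hAup, castc]
        have := step_upper hAnn hη0.le hη3 (u := θ t 0 + θ t 1)
        linarith
      · rw [hCup, castc]
        have := step_upper hCnn hη0.le hη3 (u := θ t 3 - θ t 2)
        linarith
      · rw [hCup, castc]
        have := step_lower hη0.le (u := θ t 3 - θ t 2)
        linarith
  -- differentiability at every iterate
  have hdiff : ∀ t : ℕ, DifferentiableAt ℝ Loss (θ t) := by
    intro t
    obtain ⟨i1, i2, i3, i4, -, -, -⟩ := key t
    have r1 : θ t 0 * (-1) + θ t 1 < 0 := by linarith
    have r2 : 0 < θ t 0 * 1 + θ t 1 := by linarith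
    have r3 : 0 < θ t 2 * (-1) + θ t 3 := by linarith
    have r4 : θ t 2 * 1 + θ t 3 < 0 := by linarith
    exact (loss_hasGradientAt (θ t) r1 r2 r3 r4).differentiableAt
  refine ⟨hdiff, ?_⟩
  intro t ht
  obtain ⟨i1, i2, i3, i4, e1, e2, e3⟩ := key t
  have hs7 : (7:ℝ) ≤ η * t := by
    have := (div_le_iff₀ hη0).mp ht
    linarith
  have hs0 : (0:ℝ) ≤ η * t := by linarith
  clear hstep key hdiff ht hb1 hb2
  set x0 : ℝ := θ t 0 with hx0d
  set x1 : ℝ := θ t 1 with hx1d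
  set x2 : ℝ := θ t 2 with hx2d
  set x3 : ℝ := θ t 3 with hx3d
  set w1 : ℝ := θ 0 0 with hw1d
  set w2 : ℝ := θ 0 2 with hw2d
  clear_value x0 x1 x2 x3 w1 w2
  -- numeric facts about exp
  have hE1u : Real.exp 1 < 2.7182818286 := Real.exp_one_lt_d9
  have hE1l : (2.7182818283:ℝ) < Real.exp 1 := Real.exp_one_gt_d9
  have hEhalfsq : Real.exp (1/2) * Real.exp (1/2) = Real.exp 1 := by
    rw [← Real.exp_add]; norm_num
  have hEhalf : Real.exp (1/2) ≤ 5/3 := by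
    nlinarith only [Real.exp_pos ((1/2):ℝ), hEhalfsq, hE1u]
  have hE27 : (12.5:ℝ) ≤ Real.exp 2.7 := by
    have h : Real.exp 2.7 = Real.exp 1 * Real.exp 1 * Real.exp 0.7 := by
      rw [← Real.exp_add, ← Real.exp_add]; norm_num
    have p1 : (2.7182818283:ℝ) * (2.7182818283:ℝ) ≤ Real.exp 1 * Real.exp 1 := by
      nlinarith only [hE1l]
    nlinarith only [p1, Real.add_one_le_exp (0.7:ℝ), Real.exp_pos 1, h]
  have hE3 : Real.exp 3 ≤ 21 := by
    have h : Real.exp 3 = Real.exp 1 * Real.exp 1 * Real.exp 1 := by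
      rw [← Real.exp_add, ← Real.exp_add]; norm_num
    have q2 : Real.exp 1 * Real.exp 1 ≤ 7.39 := by
      nlinarith only [hE1u, Real.exp_pos 1]
    nlinarith only [q2, hE1u, Real.exp_pos 1, h]
  have hE4 : (54:ℝ) ≤ Real.exp 4 := by
    have h : Real.exp 4 = Real.exp 1 * Real.exp 1 * (Real.exp 1 * Real.exp 1) := by
      rw [← Real.exp_add, ← Real.exp_add]
      norm_num
    have h2 : (7.3875:ℝ) ≤ Real.exp 1 * Real.exp 1 := by
      nlinarith only [hE1l]
    nlinarith only [h2, h]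
  have hw10 : (12.5:ℝ) ≤ Real.exp w1 :=
    le_trans hE27 (Real.exp_le_exp.mpr hw1l.le)
  have hw10u : Real.exp w1 ≤ 21 :=
    le_trans (Real.exp_le_exp.mpr hw1u.le) hE3
  have hw20l : (3/5:ℝ) ≤ Real.exp w2 := by
    have h1 : Real.exp (-(1/2) : ℝ) ≤ Real.exp w2 := by
      apply Real.exp_le_exp.mpr; linarith
    have h2 : Real.exp (-(1/2) : ℝ) * Real.exp (1/2) = 1 := by
      rw [← Real.exp_add]; norm_num
    nlinarith only [h1, h2, hEhalf, Real.exp_pos ((1/2):ℝ)]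
  have hw20u : Real.exp (-(w2)) ≤ 5/3 := by
    refine le_trans (Real.exp_le_exp.mpr ?_) hEhalf
    linarith
  set s : ℝ := η * t with hsdef
  set A : ℝ := x0 + x1 with hAdef
  set C : ℝ := x3 - x2 with hCdef
  set L : ℝ := Real.log (1 + 4 * s) with hLdef
  clear_value L
  clear_value C
  clear_value A
  clear_value s
  have h4s : (0:ℝ) < 1 + 4 * s := by linarith
  have hL0 : 0 ≤ L := by rw [hLdef]; exact Real.log_nonneg (by linarith)
  have hexpL : Real.exp L = 1 + 4 * s := by rw [hLdef]; exact Real.exp_log h4s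
  -- numerator bound : 1 ≤ C + w2 - A + w1
  have hthA : A - w1 ≤ Real.log (1 + (4/35) * s) := by
    rw [Real.le_log_iff_exp_le (by linarith)]
    rw [Real.exp_sub, div_le_iff₀ (Real.exp_pos _)]
    nlinarith only [e1, hw10, hs0]
  have hthC : Real.log (1 + (3/5) * s) ≤ C + w2 := by
    rw [Real.log_le_iff_le_exp (by linarith)]
    rw [Real.exp_add]
    have h2 : Real.exp (-(w2)) * Real.exp w2 = 1 := by
      rw [← Real.exp_add]; norm_num
    nlinarith only [e3, h2, hw20l, hs0, Real.exp_pos w2]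
  have hlog1 : Real.log (1 + (4/35) * s) + 1 ≤ Real.log (1 + (3/5) * s) := by
    have hratio : Real.exp 1 * (1 + (4/35) * s) ≤ 1 + (3/5) * s := by
      have hmul := mul_le_mul_of_nonneg_right hE1u.le (by linarith : (0:ℝ) ≤ 1 + (4/35) * s)
      linarith only [hmul, hs7]
    have h := Real.log_le_log (by positivity) hratio
    rw [Real.log_mul (Real.exp_ne_zero 1) (by linarith), Real.log_exp] at h
    linarith
  have hnum : (1:ℝ) ≤ C + w2 - A + w1 := by linarith
  -- denominator bounds
  have hexp4L : Real.exp (4 + L) = Real.exp 4 * (1 + 4 * s) := by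
    rw [Real.exp_add, hexpL]
  have hAden : A ≤ 4 + L := by
    have h : Real.exp A ≤ Real.exp (4 + L) := by
      rw [hexp4L]; nlinarith only [e1, hw10u, hE4, hs0]
    exact Real.exp_le_exp.mp h
  have hCden : C ≤ 4 + L := by
    have h : Real.exp C ≤ Real.exp (4 + L) := by
      rw [hexp4L]; nlinarith only [e2, hw20u, hE4, hs0]
    exact Real.exp_le_exp.mp h
  have hAlow : w1 ≤ A := by rw [hAdef]; linarith
  have hClow : -(w2) ≤ C := by rw [hCdef]; linarith
  -- final assembly
  have h2N : (1:ℝ) ≤ 2 * (x3 - x1) := by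
    have : 2 * (x3 - x1) = C + w2 - A + w1 := by
      rw [hAdef, hCdef]; rw [i1, i2]; ring
    linarith
  have h2D : 2 * (x0 - x2) = A + C + w1 - w2 := by
    rw [hAdef, hCdef]; rw [i1, i2]; ring
  have hDpos : 0 < x0 - x2 := by linarith
  have hDup : 2 * (x0 - x2) ≤ 25 + 5 * L := by
    rw [h2D]; linarith only [hAden, hCden, hL0, hw1u, hw2l]
  have hLs : Real.log (1 + 4 * η * t) = L := by
    rw [hLdef, hsdef]; ring_nf
  rw [hLs, div_le_div_iff₀ (by linarith) hDpos]
  linarith only [mul_le_mul_of_nonneg_right h2N (by linarith : (0:ℝ) ≤ 25 + 5 * L), hDup]
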